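/- arXiv:1902.00213 — 3 statements merged into one kernel-verified Lean document; each statement's English description precedes it below -/
import Mathlib

section
/- If a bipartite graph G contains an invertible pair, then the complement of G does not admit a T-free orientation. -/
namespace CocompBigraph

variable {V : Type*}

/-- `side` is a bipartition of the simple graph `G`: edges only join the two sides. -/
def IsBipartition (G : SimpleGraph V) (side : V → Bool) : Prop :=
  ∀ u v, G.Adj u v → side u ≠ side v

/-- Two edges `xy`, `x'y'` (with `x, x'` on one side and `y, y'` on the other) are
independent: they are disjoint and neither `xy'` nor `x'y` is an edge. -/
def Indep (G : SimpleGraph V) (x y x' y' : V) : Prop :=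
  G.Adj x y ∧ G.Adj x' y' ∧ x ≠ x' ∧ y ≠ y' ∧ ¬ G.Adj x y' ∧ ¬ G.Adj x' y

/-- `w` is a walk of length `n` in `G` (vertices `w 0, …, w n`). -/
def IsWalk (G : SimpleGraph V) (n : ℕ) (w : ℕ → V) : Prop :=
  ∀ i < n, G.Adj (w i) (w (i+1))

/-- Two walks of the same length `n`, beginning on the same side, are congruent if
for each `i` their `i`-th edges are independent. -/
def CongWalks (G : SimpleGraph V) (side : V → Bool) (n : ℕ) (w w' : ℕ → V) : Prop :=
  side (w 0) = side (w' 0) ∧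
  IsWalk G n w ∧ IsWalk G n w' ∧
  ∀ i < n, Indep G (w i) (w (i+1)) (w' i) (w' (i+1))

/-- `(a,b) Γ (f,g)`: there are congruent walks from `a` to `f` and from `b` to `g`. -/
def Gamma (G : SimpleGraph V) (side : V → Bool) (a b f g : V) : Prop :=
  ∃ n, ∃ w w' : ℕ → V, CongWalks G side n w w' ∧
    w 0 = a ∧ w' 0 = b ∧ w n = f ∧ w' n = g

/-- A pair of distinct vertices `u, v` is invertible if there are congruent walks
from `u` to `v` and from `v` to `u`. -/
def InvertiblePair (G : SimpleGraph V) (side : V → Bool) (u v : V) : Prop :=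
  u ≠ v ∧ Gamma G side u v v u

/-- A pair `(a,b)` is relevant if its implication class contains at least two pairs. -/
def Relevant (G : SimpleGraph V) (side : V → Bool) (a b : V) : Prop :=
  ∃ f g, Gamma G side a b f g ∧ (f, g) ≠ (a, b)

/-- An orientation of the complement of `G`: every pair of distinct vertices on the
same side gets exactly one direction (cross pairs stay undirected). -/
def IsOrientation (side : V → Bool) (O : V → V → Prop) : Prop :=
  (∀ u v, O u v → side u = side v ∧ u ≠ v) ∧
  (∀ u v, u ≠ v → side u = side v → (O u v ↔ ¬ O v u))

/-- The orientation `O` is `T`-free: no two independent edges of the bipartite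
complement agree in `O`. -/
def TFree (G : SimpleGraph V) (side : V → Bool) (O : V → V → Prop) : Prop :=
  ∀ x y x' y', side x = side x' → side y = side y' → side x ≠ side y →
    x ≠ x' → y ≠ y' → ¬ G.Adj x y → ¬ G.Adj x' y' →
    G.Adj x y' → G.Adj x' y → ¬ (O x x' ∧ O y y')

/-- The relation `O` has no directed cycle. -/
def OAcyclic (O : V → V → Prop) : Prop :=
  ∀ (n : ℕ) (w : ℕ → V), 0 < n → (∀ i < n, O (w i) (w (i+1))) → w 0 ≠ w n

/-- `G` has an `S`-free pair of orderings: linear orders of the two sides such that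
no two independent edges cross. -/
def SFreePair (G : SimpleGraph V) (side : V → Bool) : Prop :=
  ∃ lt : V → V → Prop,
    (∀ u v, lt u v → side u = side v ∧ u ≠ v) ∧
    (∀ u v, u ≠ v → side u = side v → (lt u v ↔ ¬ lt v u)) ∧
    (∀ u v w, lt u v → lt v w → lt u w) ∧
    (∀ u v w z, side u ≠ side w → lt u v → lt w z →
      G.Adj u z → G.Adj v w → (G.Adj u w ∨ G.Adj v z))

/-- An edge-asteroid: `2k+1` distinct edges `x i — y i` such that for each `i` there
is a walk joining the edges `e (i+k)` and `e (i+k+1)` (including both endpoints of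
each) containing no vertex adjacent to either end of `e i`. -/
def EdgeAsteroid (G : SimpleGraph V) (k : ℕ) (x y : ZMod (2*k+1) → V) : Prop :=
  1 ≤ k ∧
  (∀ i, G.Adj (x i) (y i)) ∧
  (∀ i j : ZMod (2*k+1), i ≠ j → (x i, y i) ≠ (x j, y j)) ∧
  ∀ i : ZMod (2*k+1), ∃ n, ∃ w : ℕ → V, IsWalk G n w ∧ 1 ≤ n ∧
    ((w 0 = x (i+k) ∧ w 1 = y (i+k)) ∨ (w 0 = y (i+k) ∧ w 1 = x (i+k))) ∧
    ((w (n-1) = y (i+k+1) ∧ w n = x (i+k+1)) ∨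
      (w (n-1) = x (i+k+1) ∧ w n = y (i+k+1))) ∧
    ∀ j ≤ n, ¬ G.Adj (w j) (x i) ∧ ¬ G.Adj (w j) (y i)

/-- An asteroid in a graph `H`: `2k+1` distinct vertices such that for each `i` there
is a path joining `v (i+k)` and `v (i+k+1)` none of whose vertices is a neighbour
of `v i`. -/
def Asteroid {W : Type*} (H : SimpleGraph W) (k : ℕ) (v : ZMod (2*k+1) → W) : Prop :=
  1 ≤ k ∧ Function.Injective v ∧
  ∀ i : ZMod (2*k+1), ∃ n, ∃ w : ℕ → W, IsWalk H n w ∧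
    w 0 = v (i+k) ∧ w n = v (i+(k+1)) ∧
    (∀ a ≤ n, ∀ b ≤ n, w a = w b → a = b) ∧
    ∀ j ≤ n, ¬ H.Adj (w j) (v i)

/-- The independence graph `I(G)`: vertices are the edges of `G` (oriented from side
`true` to side `false`), adjacent iff independent. -/
def IndepGraph (G : SimpleGraph V) (side : V → Bool) :
    SimpleGraph {p : V × V // G.Adj p.1 p.2 ∧ side p.1 = true} where
  Adj e f := Indep G e.1.1 e.1.2 f.1.1 f.1.2
  symm := by
    refine ⟨?_⟩
    rintro e f ⟨h1, h2, h3, h4, h5, h6⟩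
    exact ⟨h2, h1, h3.symm, h4.symm, h6, h5⟩
  loopless := by
    refine ⟨?_⟩
    rintro e ⟨_, _, h3, _⟩
    exact h3 rfl

/-- A graph is a comparability graph iff it has a transitive orientation. -/
def HasTransitiveOrientation {W : Type*} (H : SimpleGraph W) : Prop :=
  ∃ r : W → W → Prop,
    (∀ u v, r u v → H.Adj u v) ∧
    (∀ u v, H.Adj u v → (r u v ↔ ¬ r v u)) ∧
    (∀ u v w, r u v → r v w → r u w)

/-- The cycle `C_n` on vertex set `ZMod n`. -/
def cycleGraph (n : ℕ) : SimpleGraph (ZMod n) where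
  Adj i j := i ≠ j ∧ (j = i + 1 ∨ i = j + 1)
  symm := by refine ⟨?_⟩; rintro i j ⟨h, h'⟩; exact ⟨h.symm, h'.symm⟩
  loopless := by refine ⟨?_⟩; rintro i ⟨h, _⟩; exact h rfl

/-- `G` contains an induced cycle of length `n`. -/
def HasInducedCycle (G : SimpleGraph V) (n : ℕ) : Prop :=
  ∃ f : ZMod n → V, Function.Injective f ∧
    ∀ i j, G.Adj (f i) (f j) ↔ (cycleGraph n).Adj i j

/-- Adjacency of the auxiliary graph `G⁺` on ordered pairs:
`(u,v)` is adjacent to `(v,u)` and to every `(z,w)` such that `uw` and `vz` are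
independent edges of `G`. -/
def AuxAdj (G : SimpleGraph V) (p q : V × V) : Prop :=
  (q.1 = p.2 ∧ q.2 = p.1) ∨
  (G.Adj p.1 q.2 ∧ G.Adj p.2 q.1 ∧ p.1 ≠ p.2 ∧ q.1 ≠ q.2 ∧
    ¬ G.Adj p.1 q.1 ∧ ¬ G.Adj p.2 q.2)

/-- The auxiliary graph `G⁺`, on the set `F` of ordered pairs of distinct same-side
vertices, is bipartite (i.e. properly 2-colourable). -/
def AuxBipartite (G : SimpleGraph V) (side : V → Bool) : Prop :=
  ∃ c : {p : V × V // p.1 ≠ p.2 ∧ side p.1 = side p.2} → Bool,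
    ∀ p q, AuxAdj G p.1 q.1 → c p ≠ c q

/-- `G` is an interval containment bigraph. -/
def IntervalContainment (G : SimpleGraph V) (side : V → Bool) : Prop :=
  ∃ l r : V → ℝ, (∀ v, l v ≤ r v) ∧
    ∀ x y, side x = true → side y = false →
      (G.Adj x y ↔ (l x ≤ l y ∧ r y ≤ r x))

/-- if `G` contains an invertible pair, then the complement of `G`
has no `T`-free orientation. -/
theorem stmt_2 (G : SimpleGraph V) (side : V → Bool) (hbip : IsBipartition G side)
    (h : ∃ u v, InvertiblePair G side u v) :
    ¬ ∃ O : V → V → Prop, IsOrientation side O ∧ TFree G side O := by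
  rintro ⟨O, ⟨hO1, hO2⟩, hT⟩
  obtain ⟨u, v, huv, n, w, w', ⟨hside, hw, hw', hind⟩, h0, h0', hn, hn'⟩ := h
  -- sides agree along the two walks
  have hs : ∀ i ≤ n, side (w i) = side (w' i) := by
    intro i
    induction i with
    | zero => intro _; exact hside
    | succ k ih =>
      intro hk
      have hk' : k < n := Nat.lt_of_succ_le hk
      have hkle : k ≤ n := Nat.le_of_succ_le hk
      have h1 := hbip _ _ (hw k hk')
      have h2 := hbip _ _ (hw' k hk')
      have h3 := ih hkle
      revert h1 h2 h3
      cases side (w k) <;> cases side (w' k) <;>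
        cases side (w (k+1)) <;> cases side (w' (k+1)) <;> simp
  -- the key propagation steps
  have key : ∀ i < n, O (w i) (w' i) → O (w (i+1)) (w' (i+1)) := by
    intro i hi hOi
    obtain ⟨ha, ha', hne, hne', hna, hna'⟩ := hind i hi
    have hsi := hs i (le_of_lt hi)
    have hsi1 := hs (i+1) hi
    have hdif : side (w i) ≠ side (w (i+1)) := hbip _ _ ha
    have hdif' : side (w i) ≠ side (w' (i+1)) := by rw [hsi1] at hdif; exact hdif
    have hT1 := hT (w i) (w' (i+1)) (w' i) (w (i+1)) hsi hsi1.symm hdif'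
      hne hne'.symm hna hna' ha ha'
    have hnot : ¬ O (w' (i+1)) (w (i+1)) := fun hc => hT1 ⟨hOi, hc⟩
    exact (hO2 (w (i+1)) (w' (i+1)) hne' hsi1).mpr hnot
  have key' : ∀ i < n, O (w' i) (w i) → O (w' (i+1)) (w (i+1)) := by
    intro i hi hOi
    obtain ⟨ha, ha', hne, hne', hna, hna'⟩ := hind i hi
    have hsi := hs i (le_of_lt hi)
    have hsi1 := hs (i+1) hi
    have hdif : side (w' i) ≠ side (w' (i+1)) := hbip _ _ ha'
    have hdif' : side (w' i) ≠ side (w (i+1)) := by rw [← hsi1] at hdif; exact hdif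
    have hT1 := hT (w' i) (w (i+1)) (w i) (w' (i+1)) hsi.symm hsi1 hdif'
      hne.symm hne' hna' hna ha' ha
    have hnot : ¬ O (w (i+1)) (w' (i+1)) := fun hc => hT1 ⟨hOi, hc⟩
    exact (hO2 (w' (i+1)) (w (i+1)) hne'.symm hsi1.symm).mpr hnot
  have chain : ∀ i ≤ n, O (w 0) (w' 0) → O (w i) (w' i) := by
    intro i
    induction i with
    | zero => intro _ hh; exact hh
    | succ k ih =>
      intro hk hh
      exact key k (Nat.lt_of_succ_le hk) (ih (Nat.le_of_succ_le hk) hh)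
  have chain' : ∀ i ≤ n, O (w' 0) (w 0) → O (w' i) (w i) := by
    intro i
    induction i with
    | zero => intro _ hh; exact hh
    | succ k ih =>
      intro hk hh
      exact key' k (Nat.lt_of_succ_le hk) (ih (Nat.le_of_succ_le hk) hh)
  have hssame : side u = side v := by rw [← h0, ← h0']; exact hside
  by_cases hOuv : O u v
  · have : O (w n) (w' n) := by
      apply chain n le_rfl; rw [h0, h0']; exact hOuv
    rw [hn, hn'] at this
    exact ((hO2 u v huv hssame).mp hOuv) this
  · have hOvu : O v u := by
      have := (hO2 v u (Ne.symm huv) hssame.symm)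
      rcases Classical.em (O v u) with h | h
      · exact h
      · exact absurd ((hO2 u v huv hssame).mpr (by
          intro hc; exact h hc)) hOuv
    have : O (w' n) (w n) := by
      apply chain' n le_rfl; rw [h0, h0']; exact hOvu
    rw [hn, hn'] at this
    exact hOuv this

end CocompBigraph
end

section
/- A bipartite graph G contains an edge-asteroid if and only if the complement of its independence graph I(G) contains an asteroid. -/
namespace CocompBigraph

variable {V : Type*}

section Aux
open SimpleGraph
variable {W : Type*} {H : SimpleGraph W}

lemma aux_getVert_inj {u v : W} {p : H.Walk u v} (hp : p.IsPath) :
    ∀ a ≤ p.length, ∀ b ≤ p.length, p.getVert a = p.getVert b → a = b := by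
  induction p with
  | nil => intro a ha b hb _; simp only [Walk.length_nil, Nat.le_zero] at ha hb; omega
  | @cons u x v hadj q ih =>
    rw [Walk.cons_isPath_iff] at hp
    intro a ha b hb h
    simp only [Walk.length_cons] at ha hb
    match a, b with
    | 0, 0 => rfl
    | 0, b+1 =>
      exfalso
      apply hp.2
      rw [Walk.mem_support_iff_exists_getVert]
      refine ⟨b, ?_, by omega⟩
      have h0 : (q.cons hadj).getVert 0 = u := Walk.getVert_zero _
      have hb' : (q.cons hadj).getVert (b+1) = q.getVert b := rfl
      rw [h0, hb'] at h
      exact h.symm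
    | a+1, 0 =>
      exfalso
      apply hp.2
      rw [Walk.mem_support_iff_exists_getVert]
      refine ⟨a, ?_, by omega⟩
      have h0 : (q.cons hadj).getVert 0 = u := Walk.getVert_zero _
      have ha' : (q.cons hadj).getVert (a+1) = q.getVert a := rfl
      rw [h0, ha'] at h
      exact h
    | a+1, b+1 =>
      have h' : q.getVert a = q.getVert b := h
      have := ih hp.1 a (by omega) b (by omega) h'
      omega

lemma exists_walk_of_lazy :
    ∀ (n : ℕ) (w : ℕ → W), (∀ i < n, w i = w (i+1) ∨ H.Adj (w i) (w (i+1))) →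
    ∃ p : H.Walk (w 0) (w n), ∀ x ∈ p.support, ∃ j ≤ n, w j = x := by
  intro n
  induction n with
  | zero =>
    intro w _
    exact ⟨Walk.nil, by intro x hx; simp only [Walk.support_nil, List.mem_singleton] at hx
                        exact ⟨0, le_refl 0, hx.symm⟩⟩
  | succ n ih =>
    intro w hw
    obtain ⟨p, hp⟩ := ih (fun t => w (t+1)) (fun i hi => hw (i+1) (by omega))
    rcases hw 0 (by omega) with h | h
    · refine ⟨p.copy h.symm rfl, ?_⟩
      intro x hx
      rw [Walk.support_copy] at hx
      obtain ⟨j, hj, hjx⟩ := hp x hx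
      exact ⟨j+1, by omega, hjx⟩
    · refine ⟨p.cons h, ?_⟩
      intro x hx
      rw [Walk.support_cons, List.mem_cons] at hx
      rcases hx with hx | hx
      · exact ⟨0, by omega, hx.symm⟩
      · obtain ⟨j, hj, hjx⟩ := hp x hx
        exact ⟨j+1, by omega, hjx⟩

lemma extract_path (n : ℕ) (w : ℕ → W) (P : W → Prop)
    (hw : ∀ i < n, w i = w (i+1) ∨ H.Adj (w i) (w (i+1)))
    (hP : ∀ j ≤ n, P (w j)) :
    ∃ m : ℕ, ∃ w' : ℕ → W, IsWalk H m w' ∧ w' 0 = w 0 ∧ w' m = w n ∧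
      (∀ a ≤ m, ∀ b ≤ m, w' a = w' b → a = b) ∧ ∀ j ≤ m, P (w' j) := by
  classical
  obtain ⟨p, hp⟩ := exists_walk_of_lazy n w hw
  refine ⟨p.bypass.length, p.bypass.getVert, ?_, p.bypass.getVert_zero, p.bypass.getVert_length,
    aux_getVert_inj p.bypass_isPath, ?_⟩
  · intro i hi; exact p.bypass.adj_getVert_succ hi
  · intro j hj
    have h1 : p.bypass.getVert j ∈ p.bypass.support := by
      rw [Walk.mem_support_iff_exists_getVert]; exact ⟨j, rfl, hj⟩
    obtain ⟨t, ht, htx⟩ := hp _ (p.support_bypass_subset h1)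
    rw [← htx]; exact hP t ht

end Aux

lemma isWalk_append {G : SimpleGraph V} {m l : ℕ} {w u : ℕ → V}
    (hw : IsWalk G m w) (hu : IsWalk G l u) (h : w m = u 0) :
    ∃ w', IsWalk G (m + l) w' ∧ (∀ j ≤ m, w' j = w j) ∧ (∀ t, w' (m + t) = u t) := by
  refine ⟨fun j => if j ≤ m then w j else u (j - m), ?_, ?_, ?_⟩
  · intro i hi
    by_cases h1 : i + 1 ≤ m
    · simp only [if_pos (by omega : i ≤ m), if_pos h1]
      exact hw i (by omega)
    · by_cases h2 : i ≤ m
      · have hi2 : i = m := by omega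
        subst hi2
        simp only [if_pos h2, if_neg h1, h]
        have e : i + 1 - i = 1 := by omega
        rw [e]
        exact hu 0 (by omega)
      · simp only [if_neg h1, if_neg h2]
        have e1 : i + 1 - m = (i - m) + 1 := by omega
        rw [e1]
        exact hu (i - m) (by omega)
  · intro j hj; simp only [if_pos hj]
  · intro t
    by_cases ht : t = 0
    · subst ht; simp only [Nat.add_zero, if_pos (le_refl m), h]
    · have hh : ¬ (m + t ≤ m) := by omega
      simp only [if_neg hh]
      congr 1
      omega

def orient (G : SimpleGraph V) (side : V → Bool) (a b : V) (h : G.Adj a b)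
    (hs : side a ≠ side b) : {p : V × V // G.Adj p.1 p.2 ∧ side p.1 = true} :=
  if ha : side a = true then ⟨(a, b), h, ha⟩
  else ⟨(b, a), h.symm, by
    cases hsb : side b
    · exfalso
      cases hsa : side a
      · rw [hsa, hsb] at hs; exact hs rfl
      · exact ha hsa
    · rfl⟩

lemma orient_val (G : SimpleGraph V) (side : V → Bool) (a b : V) (h : G.Adj a b)
    (hs : side a ≠ side b) :
    (orient G side a b h hs).1 = if side a = true then (a, b) else (b, a) := by
  unfold orient
  split <;> rfl

lemma bool_true_of_ne {a b : Bool} (h : a ≠ b) (hb : b ≠ true) : a = true := by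
  revert h hb; cases a <;> cases b <;> decide

theorem forward {G : SimpleGraph V} {side : V → Bool} (hbip : IsBipartition G side)
    (k : ℕ) (x y : ZMod (2*k+1) → V) (hside : ∀ i, side (x i) = true)
    (hast : EdgeAsteroid G k x y) :
    ∃ v : ZMod (2*k+1) → {p : V × V // G.Adj p.1 p.2 ∧ side p.1 = true},
      Asteroid (IndepGraph G side)ᶜ k v := by
  obtain ⟨hk, hadj, hdist, hwalks⟩ := hast
  have hys : ∀ i, side (y i) ≠ true := fun i h => hbip _ _ (hadj i) ((hside i).trans h.symm)
  refine ⟨fun i => ⟨(x i, y i), hadj i, hside i⟩, hk, ?_, ?_⟩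
  · intro i j hij
    by_contra hne
    exact hdist i j hne (congrArg Subtype.val hij)
  · intro i
    obtain ⟨n, w, hwalk, hn, hstart, hend, havoid⟩ := hwalks i
    have hbipw : ∀ j, j < n → side (w j) ≠ side (w (j+1)) := fun j hj => hbip _ _ (hwalk j hj)
    set m := n - 1 with hm
    set F : ℕ → {p : V × V // G.Adj p.1 p.2 ∧ side p.1 = true} :=
      fun j => orient G side (w (min j m)) (w (min j m + 1))
        (hwalk _ (by omega)) (hbipw _ (by omega)) with hF
    have hval : ∀ j, (F j).1 = if side (w (min j m)) = true
        then (w (min j m), w (min j m + 1)) else (w (min j m + 1), w (min j m)) := by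
      intro j
      simp only [hF]
      exact orient_val G side _ _ _ _
    have key : ∀ e : {p : V × V // G.Adj p.1 p.2 ∧ side p.1 = true},
        (¬G.Adj e.1.1 (x i) ∧ ¬G.Adj e.1.1 (y i)) → (¬G.Adj e.1.2 (x i) ∧ ¬G.Adj e.1.2 (y i)) →
        Indep G e.1.1 e.1.2 (x i) (y i) := by
      rintro ⟨⟨a, b⟩, hab, hsa⟩ ha hb
      exact ⟨hab, hadj i,
        fun h => hb.1 (by rw [h] at hab; exact hab.symm),
        fun h => ha.2 (by rw [h] at hab; exact hab),
        ha.2, fun h => hb.1 h.symm⟩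
    have hends : ∀ j, (¬G.Adj (F j).1.1 (x i) ∧ ¬G.Adj (F j).1.1 (y i)) ∧
        (¬G.Adj (F j).1.2 (x i) ∧ ¬G.Adj (F j).1.2 (y i)) := by
      intro j
      have h1 := havoid (min j m) (by omega)
      have h2 := havoid (min j m + 1) (by omega)
      by_cases hs : side (w (min j m)) = true
      · rw [hval j, if_pos hs]; exact ⟨h1, h2⟩
      · rw [hval j, if_neg hs]; exact ⟨h2, h1⟩
    have hIndep : ∀ j, Indep G (F j).1.1 (F j).1.2 (x i) (y i) :=
      fun j => key (F j) (hends j).1 (hends j).2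
    have hP : ∀ j ≤ m, ¬ ((IndepGraph G side)ᶜ).Adj (F j) ⟨(x i, y i), hadj i, hside i⟩ := by
      intro j _
      rw [SimpleGraph.compl_adj]
      rintro ⟨-, hna⟩
      exact hna (hIndep j)
    have lazy : ∀ j < m, F j = F (j+1) ∨ ((IndepGraph G side)ᶜ).Adj (F j) (F (j+1)) := by
      intro j hj
      by_cases heq : F j = F (j+1)
      · exact Or.inl heq
      · right
        rw [SimpleGraph.compl_adj]
        refine ⟨heq, ?_⟩
        intro hI
        have hI' : Indep G (F j).1.1 (F j).1.2 (F (j+1)).1.1 (F (j+1)).1.2 := hI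
        have e1 : min j m = j := by omega
        have e2 : min (j+1) m = j + 1 := by omega
        have hvj := hval j
        have hvk := hval (j+1)
        rw [e1] at hvj
        rw [e2] at hvk
        by_cases hs : side (w (j+1)) = true
        · have hsj : ¬ side (w j) = true := fun h => hbipw j (by omega) (h.trans hs.symm)
          rw [hvj, if_neg hsj, hvk, if_pos hs] at hI'
          exact hI'.2.2.1 rfl
        · have hsj : side (w j) = true := bool_true_of_ne (hbipw j (by omega)) hs
          rw [hvj, if_pos hsj, hvk, if_neg hs] at hI'
          exact hI'.2.2.2.1 rfl
    have hF0 : F 0 = ⟨(x (i+k), y (i+k)), hadj _, hside _⟩ := by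
      apply Subtype.ext
      have e0 : min 0 m = 0 := by omega
      have hv0 := hval 0
      rw [e0] at hv0
      rcases hstart with ⟨h1, h2⟩ | ⟨h1, h2⟩
      · have hs : side (w 0) = true := by rw [h1]; exact hside _
        rw [hv0, if_pos hs, h1, h2]
      · have hs : ¬ side (w 0) = true := by rw [h1]; exact hys _
        rw [hv0, if_neg hs, h1, h2]
    have hm1 : m + 1 = n := by omega
    have hFm : F m = ⟨(x (i+k+1), y (i+k+1)), hadj _, hside _⟩ := by
      apply Subtype.ext
      have hvm := hval m
      rw [min_self] at hvm
      have hwm1 : w (m + 1) = w n := by rw [hm1]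
      have hwm : w m = w (n-1) := by rw [hm]
      rcases hend with ⟨h1, h2⟩ | ⟨h1, h2⟩
      · have hs : ¬ side (w m) = true := by rw [hwm, h1]; exact hys _
        rw [hvm, if_neg hs, hwm1, hwm, h1, h2]
      · have hs : side (w m) = true := by rw [hwm, h1]; exact hside _
        rw [hvm, if_pos hs, hwm, hwm1, h1, h2]
    obtain ⟨M, w', hw1, hw2, hw3, hw4, hw5⟩ := extract_path m F (fun e => ¬ ((IndepGraph G side)ᶜ).Adj e ⟨(x i, y i), hadj i, hside i⟩) lazy hP
    have hcast : i + ((k : ZMod (2*k+1)) + 1) = i + k + 1 := by ring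
    refine ⟨M, w', hw1, ?_, ?_, hw4, hw5⟩
    · rw [hw2, hF0]
    · rw [hw3, hFm]
      congr 1
      ring_nf


lemma step_extend {G : SimpleGraph V} {m : ℕ} {w : ℕ → V} (hw : IsWalk G m w)
    (l : ℕ) (hl : 1 ≤ l) (u : ℕ → V) (hu : IsWalk G l u) (h0 : u 0 = w m) :
    ∃ w', IsWalk G (m + l) w' ∧ (∀ j ≤ m, w' j = w j) ∧
      w' (m + l - 1) = u (l-1) ∧ w' (m+l) = u l ∧
      ∀ j ≤ m + l, (j ≤ m) ∨ ∃ t, 1 ≤ t ∧ t ≤ l ∧ w' j = u t := by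
  obtain ⟨w', h1, h2, h3⟩ := isWalk_append hw hu h0.symm
  refine ⟨w', h1, h2, ?_, ?_, ?_⟩
  · have e : m + l - 1 = m + (l-1) := by omega
    rw [e]; exact h3 (l-1)
  · exact h3 l
  · intro j hj
    by_cases hjm : j ≤ m
    · exact Or.inl hjm
    · right
      refine ⟨j - m, by omega, by omega, ?_⟩
      calc w' j = w' (m + (j - m)) := by congr 1; omega
        _ = u (j - m) := h3 _

lemma build_walk {G : SimpleGraph V} {side : V → Bool} (hbip : IsBipartition G side)
    {xi yi : V} (hxy : G.Adj xi yi) (hsxi : side xi = true)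
    (n : ℕ) (p : ℕ → {q : V × V // G.Adj q.1 q.2 ∧ side q.1 = true}) :
    (∀ t < n, ((IndepGraph G side)ᶜ).Adj (p t) (p (t+1))) →
    (∀ j ≤ n, Indep G (p j).1.1 (p j).1.2 xi yi) →
    ∃ m, ∃ w : ℕ → V, IsWalk G m w ∧ 1 ≤ m ∧ w 0 = (p 0).1.1 ∧ w 1 = (p 0).1.2 ∧
      w (m-1) = (p n).1.1 ∧ w m = (p n).1.2 ∧
      ∀ j ≤ m, ¬ G.Adj (w j) xi ∧ ¬ G.Adj (w j) yi := by
  have hsyi : side yi = false := by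
    have h := hbip _ _ hxy
    rw [hsxi] at h
    cases hv : side yi
    · rfl
    · exact absurd hv.symm h
  have good : ∀ e : {q : V × V // G.Adj q.1 q.2 ∧ side q.1 = true},
      Indep G e.1.1 e.1.2 xi yi →
      (¬G.Adj e.1.1 xi ∧ ¬G.Adj e.1.1 yi) ∧ (¬G.Adj e.1.2 xi ∧ ¬G.Adj e.1.2 yi) := by
    rintro ⟨⟨a, b⟩, hab, hsa⟩ ⟨-, -, hax, hby, hay, hxb⟩
    have hsb : side b = false := by
      have h := hbip _ _ hab
      rw [hsa] at h
      cases hv : side b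
      · rfl
      · exact absurd hv.symm h
    refine ⟨⟨fun h => hbip _ _ h (hsa.trans hsxi.symm), hay⟩,
      ⟨fun h => hxb h.symm, fun h => hbip _ _ h (hsb.trans hsyi.symm)⟩⟩
  induction n with
  | zero =>
    intro _ hind
    refine ⟨1, fun j => if j = 0 then (p 0).1.1 else (p 0).1.2, ?_, le_refl 1,
      by simp, by simp, by simp, by simp, ?_⟩
    · intro t ht
      have : t = 0 := by omega
      subst this
      simp only [if_pos rfl, if_neg (by omega : (0:ℕ)+1 ≠ 0)]
      exact (p 0).2.1
    · intro j hj
      have hg := good (p 0) (hind 0 (by omega))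
      by_cases hj0 : j = 0
      · subst hj0; simp only [if_pos rfl]; exact hg.1
      · simp only [if_neg hj0]; exact hg.2
  | succ n ih =>
    intro hp hind
    obtain ⟨m, w, hw, hm1, hw0, hw1, hwl, hwe, hprop⟩ :=
      ih (fun t ht => hp t (by omega)) (fun j hj => hind j (by omega))
    set a := (p n).1.1
    set b := (p n).1.2
    set a' := (p (n+1)).1.1
    set b' := (p (n+1)).1.2
    have hab : G.Adj a b := (p n).2.1
    have hab' : G.Adj a' b' := (p (n+1)).2.1
    have hadjc := hp n (by omega)
    rw [SimpleGraph.compl_adj] at hadjc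
    obtain ⟨-, hnI⟩ := hadjc
    have hnI' : ¬ Indep G a b a' b' := hnI
    have hga := good (p n) (hind n (by omega))
    have hga' := good (p (n+1)) (hind (n+1) (le_refl _))
    have hcases : G.Adj b a' ∨ G.Adj a b' := by
      by_cases h1 : a = a'
      · left; rw [← h1]; exact hab.symm
      by_cases h2 : b = b'
      · left; rw [h2]; exact hab'.symm
      by_cases h3 : G.Adj a' b
      · left; exact h3.symm
      by_cases h4 : G.Adj a b'
      · right; exact h4
      exact absurd ⟨hab, hab', h1, h2, h4, h3⟩ hnI'
    rcases hcases with hcase | hcase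
    · -- 2-step extension: b → a' → b'
      set u : ℕ → V := fun t => if t = 0 then b else if t = 1 then a' else b' with hu
      have huw : IsWalk G 2 u := by
        intro t ht
        interval_cases t
        · simpa only [hu, if_pos rfl, if_neg (by omega : (1:ℕ) ≠ 0), if_pos rfl, ↓reduceIte] using hcase
        · simpa only [hu, if_neg (by omega : (1:ℕ) ≠ 0), if_pos rfl,
            if_neg (by omega : (2:ℕ) ≠ 0), if_neg (by omega : (2:ℕ) ≠ 1), ↓reduceIte] using hab'
      obtain ⟨w', h1, h2, h3, h4, h5⟩ := step_extend hw 2 (by omega) u huw (by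
        simp only [hu, if_pos rfl]; exact hwe.symm)
      refine ⟨m + 2, w', h1, by omega, ?_, ?_, ?_, ?_, ?_⟩
      · rw [h2 0 (by omega)]; exact hw0
      · rw [h2 1 (by omega)]; exact hw1
      · have e : m + 2 - 1 = m + 2 - 1 := rfl
        rw [h3]
        simp only [hu]
        norm_num
      · rw [h4]
        simp only [hu]
        norm_num
      · intro j hj
        rcases h5 j hj with hjm | ⟨t, ht1, ht2, hteq⟩
        · rw [h2 j hjm]; exact hprop j hjm
        · rw [hteq]
          interval_cases t
          · simp only [hu, if_neg (by omega : (1:ℕ) ≠ 0), if_pos rfl]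
            exact hga'.1
          · simp only [hu, if_neg (by omega : (2:ℕ) ≠ 0), if_neg (by omega : (2:ℕ) ≠ 1)]
            exact hga'.2
    · -- 4-step extension: b → a → b' → a' → b'
      set u : ℕ → V := fun t => if t = 0 then b else if t = 1 then a
        else if t = 2 then b' else if t = 3 then a' else b' with hu
      have huw : IsWalk G 4 u := by
        intro t ht
        interval_cases t <;>
          simp only [hu] <;> norm_num
        · exact hab.symm
        · exact hcase
        · exact hab'.symm
        · exact hab'
      obtain ⟨w', h1, h2, h3, h4, h5⟩ := step_extend hw 4 (by omega) u huw (by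
        simp only [hu, if_pos rfl]; exact hwe.symm)
      refine ⟨m + 4, w', h1, by omega, ?_, ?_, ?_, ?_, ?_⟩
      · rw [h2 0 (by omega)]; exact hw0
      · rw [h2 1 (by omega)]; exact hw1
      · rw [h3]
        simp only [hu]
        norm_num
      · rw [h4]
        simp only [hu]
        norm_num
      · intro j hj
        rcases h5 j hj with hjm | ⟨t, ht1, ht2, hteq⟩
        · rw [h2 j hjm]; exact hprop j hjm
        · rw [hteq]
          interval_cases t <;> simp only [hu] <;> norm_num
          · exact hga.1
          · exact hga'.2
          · exact hga'.1
          · exact hga'.2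

theorem backward {G : SimpleGraph V} {side : V → Bool} (hbip : IsBipartition G side)
    (k : ℕ) (v : ZMod (2*k+1) → {p : V × V // G.Adj p.1 p.2 ∧ side p.1 = true})
    (hast : Asteroid (IndepGraph G side)ᶜ k v) :
    ∃ x y : ZMod (2*k+1) → V, (∀ i, side (x i) = true) ∧ EdgeAsteroid G k x y := by
  obtain ⟨hk, hinj, hpaths⟩ := hast
  haveI : NeZero (2*k+1) := ⟨by omega⟩
  have hk0 : ((k : ZMod (2*k+1))) ≠ 0 := by
    intro h
    rw [ZMod.natCast_eq_zero_iff] at h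
    exact absurd (Nat.le_of_dvd (by omega) h) (by omega)
  refine ⟨fun i => (v i).1.1, fun i => (v i).1.2, fun i => (v i).2.2, hk,
    fun i => (v i).2.1, ?_, ?_⟩
  · intro i j hij hpair
    apply hij
    apply hinj
    apply Subtype.ext
    have h1 : (v i).1.1 = (v j).1.1 := congrArg Prod.fst hpair
    have h2 : (v i).1.2 = (v j).1.2 := congrArg Prod.snd hpair
    exact Prod.ext h1 h2
  · intro i
    obtain ⟨n, p, hp, hp0, hpn, hpinj, hpavoid⟩ := hpaths i
    have hne : i + (k : ZMod (2*k+1)) ≠ i := by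
      intro h
      exact hk0 (by rwa [add_eq_left] at h)
    have hind : ∀ j ≤ n, Indep G (p j).1.1 (p j).1.2 ((v i).1.1) ((v i).1.2) := by
      intro j hj
      have hnotadj := hpavoid j hj
      rw [SimpleGraph.compl_adj] at hnotadj
      by_cases hne' : p j = v i
      · exfalso
        match j, hj with
        | 0, _ =>
          rw [hp0] at hne'
          exact hne (hinj hne')
        | (t+1), hj =>
          have hadj := hp t (by omega)
          rw [hne'] at hadj
          exact hpavoid t (by omega) hadj
      · have : ¬¬ (IndepGraph G side).Adj (p j) (v i) := fun hh => hnotadj ⟨hne', hh⟩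
        exact not_not.mp this
    obtain ⟨m, w, hw, hm1, hw0, hw1, hwlast, hwend, hwprop⟩ :=
      build_walk hbip (v i).2.1 (v i).2.2 n p hp hind
    have hcast : v (i + ((k : ZMod (2*k+1)) + 1)) = v (i + k + 1) := by
      congr 1
      ring_nf
    refine ⟨m, w, hw, hm1, Or.inl ⟨by rw [hw0, hp0], by rw [hw1, hp0]⟩,
      Or.inr ⟨by rw [hwlast, hpn, hcast], by rw [hwend, hpn, hcast]⟩,
      hwprop⟩

/-- `G` contains an edge-asteroid iff the complement of its
independence graph `I(G)` contains an asteroid. -/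
theorem stmt_4 (G : SimpleGraph V) (side : V → Bool) (hbip : IsBipartition G side) :
    (∃ k, ∃ x y : ZMod (2*k+1) → V, (∀ i, side (x i) = true) ∧ EdgeAsteroid G k x y)
      ↔
    (∃ k, ∃ v : ZMod (2*k+1) → {p : V × V // G.Adj p.1 p.2 ∧ side p.1 = true},
      Asteroid (IndepGraph G side)ᶜ k v) := by
  constructor
  · rintro ⟨k, x, y, hside, hast⟩
    obtain ⟨v, hv⟩ := forward hbip k x y hside hast
    exact ⟨k, v, hv⟩
  · rintro ⟨k, v, hast⟩
    obtain ⟨x, y, hside, hast'⟩ := backward hbip k v hast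
    exact ⟨k, x, y, hside, hast'⟩

end CocompBigraph
end

section
/- If the independence graph I(G) of a bipartite graph G is a comparability graph, then the complement of G has a T-free orientation. -/
namespace CocompBigraph

variable {V : Type*}

/-- if `I(G)` is a comparability graph, then the complement of `G`
has a `T`-free orientation. -/
theorem stmt_5 (G : SimpleGraph V) (side : V → Bool) (hbip : IsBipartition G side)
    (h : HasTransitiveOrientation (IndepGraph G side)) :
    ∃ O : V → V → Prop, IsOrientation side O ∧ TFree G side O := by
  classical
  obtain ⟨r, hr1, hr2, hr3⟩ := h
  have hside2 : ∀ e : {p : V × V // G.Adj p.1 p.2 ∧ side p.1 = true}, side e.1.2 = false := by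
    intro e
    have hne := hbip e.1.1 e.1.2 e.2.1
    rw [e.2.2] at hne
    exact Bool.eq_false_iff.mpr (Ne.symm hne)
  -- the induced domination relation on vertices
  let D : V → V → Prop := fun u v =>
    ∃ e f : {p : V × V // G.Adj p.1 p.2 ∧ side p.1 = true}, r e f ∧
      ((e.1.1 = u ∧ f.1.1 = v) ∨ (e.1.2 = u ∧ f.1.2 = v))
  have hInd : ∀ e f : {p : V × V // G.Adj p.1 p.2 ∧ side p.1 = true},
      r e f → Indep G e.1.1 e.1.2 f.1.1 f.1.2 := fun e f hef => hr1 e f hef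
  -- antisymmetry of D
  have hanti : ∀ u v, D u v → ¬ D v u := by
    rintro u v ⟨e1, f1, h1, hc1⟩ ⟨e2, f2, h2, hc2⟩
    obtain ⟨A1, B1, C1, D1, E1, F1⟩ := hInd e1 f1 h1
    obtain ⟨A2, B2, C2, D2, E2, F2⟩ := hInd e2 f2 h2
    rcases hc1 with ⟨hu1, hv1⟩ | ⟨hu1, hv1⟩ <;> rcases hc2 with ⟨hv2, hu2⟩ | ⟨hv2, hu2⟩
    · -- both first-slot
      subst hu1; subst hv1
      rw [hv2] at E2 C2
      have hIndf : Indep G f1.1.1 f1.1.2 f2.1.1 f2.1.2 := by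
        refine ⟨f1.2.1, f2.2.1, C2, ?_, E2, ?_⟩
        · intro hEq; rw [hEq] at B1; exact E2 B1
        · rw [hu2]; exact E1
      have hAdjf : (IndepGraph G side).Adj f1 f2 := hIndf
      by_cases hc : r f1 f2
      · obtain ⟨-, -, C3, -⟩ := hInd _ _ (hr3 _ _ _ h1 hc)
        exact C3 hu2.symm
      · have hc' : r f2 f1 := by have := hr2 f2 f1 hAdjf.symm; tauto
        obtain ⟨-, -, C3, -⟩ := hInd _ _ (hr3 _ _ _ h2 hc')
        exact C3 hv2
    · -- mixed: side u both true and false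
      have t1 : side u = true := by rw [← hu1]; exact e1.2.2
      have t2 : side u = false := by rw [← hu2]; exact hside2 f2
      rw [t1] at t2; exact Bool.noConfusion t2
    · have t1 : side u = false := by rw [← hu1]; exact hside2 e1
      have t2 : side u = true := by rw [← hu2]; exact f2.2.2
      rw [t2] at t1; exact Bool.noConfusion t1
    · -- both second-slot
      subst hu1; subst hv1
      rw [hv2] at F2 D2
      have hIndf : Indep G f1.1.1 f1.1.2 f2.1.1 f2.1.2 := by
        refine ⟨f1.2.1, f2.2.1, ?_, D2, ?_, F2⟩
        · intro hEq; rw [hEq] at B1; exact F2 B1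
        · rw [hu2]; exact F1
      have hAdjf : (IndepGraph G side).Adj f1 f2 := hIndf
      by_cases hc : r f1 f2
      · obtain ⟨-, -, -, D3, -⟩ := hInd _ _ (hr3 _ _ _ h1 hc)
        exact D3 hu2.symm
      · have hc' : r f2 f1 := by have := hr2 f2 f1 hAdjf.symm; tauto
        obtain ⟨-, -, -, D3, -⟩ := hInd _ _ (hr3 _ _ _ h2 hc')
        exact D3 hv2
  -- the orientation
  refine ⟨fun u v => side u = side v ∧ u ≠ v ∧
      (D u v ∨ (¬ D v u ∧ WellOrderingRel u v)), ⟨?_, ?_⟩, ?_⟩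
  · exact fun u v hO => ⟨hO.1, hO.2.1⟩
  · intro u v huv hs
    constructor
    · rintro ⟨-, -, hDuv | ⟨hnD, hW⟩⟩
      · rintro ⟨-, -, hDvu | ⟨hnD', -⟩⟩
        · exact hanti u v hDuv hDvu
        · exact hnD' hDuv
      · rintro ⟨-, -, hDvu | ⟨-, hW'⟩⟩
        · exact hnD hDvu
        · exact asymm hW hW'
    · intro hnO
      refine ⟨hs, huv, ?_⟩
      by_cases hDuv : D u v
      · exact Or.inl hDuv
      · refine Or.inr ⟨?_, ?_⟩
        · intro hDvu
          exact hnO ⟨hs.symm, huv.symm, Or.inl hDvu⟩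
        · rcases trichotomous_of WellOrderingRel u v with hW | hEq | hW
          · exact hW
          · exact absurd hEq huv
          · exact absurd ⟨hs.symm, huv.symm, Or.inr ⟨hDuv, hW⟩⟩ hnO
  · -- T-freeness
    intro x y x' y' hsx hsy hsxy hxx' hyy' hnxy hnx'y' haxy' hax'y hO
    obtain ⟨⟨-, -, hOx⟩, ⟨-, -, hOy⟩⟩ := hO
    cases hbx : side x with
    | true =>
      have hbx' : side x' = true := by rw [← hsx]; exact hbx
      let e : {p : V × V // G.Adj p.1 p.2 ∧ side p.1 = true} := ⟨(x, y'), haxy', hbx⟩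
      let f : {p : V × V // G.Adj p.1 p.2 ∧ side p.1 = true} := ⟨(x', y), hax'y, hbx'⟩
      have hIef : Indep G x y' x' y := ⟨haxy', hax'y, hxx', fun hEq => hyy' hEq.symm, hnxy, hnx'y'⟩
      have hAef : (IndepGraph G side).Adj e f := hIef
      by_cases hc : r e f
      · have hDy : D y' y := ⟨e, f, hc, Or.inr ⟨rfl, rfl⟩⟩
        rcases hOy with hDyy' | ⟨hnD, -⟩
        · exact hanti _ _ hDy hDyy'
        · exact hnD hDy
      · have hc' : r f e := by have := hr2 f e hAef.symm; tauto
        have hDx : D x' x := ⟨f, e, hc', Or.inl ⟨rfl, rfl⟩⟩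
        rcases hOx with hDxx' | ⟨hnD, -⟩
        · exact hanti _ _ hDx hDxx'
        · exact hnD hDx
    | false =>
      have hby : side y = true := by
        cases hby : side y with
        | true => rfl
        | false => rw [hbx, hby] at hsxy; exact absurd rfl hsxy
      have hby' : side y' = true := by rw [← hsy]; exact hby
      let e : {p : V × V // G.Adj p.1 p.2 ∧ side p.1 = true} := ⟨(y', x), haxy'.symm, hby'⟩
      let f : {p : V × V // G.Adj p.1 p.2 ∧ side p.1 = true} := ⟨(y, x'), hax'y.symm, hby⟩
      have hIef : Indep G y' x y x' :=
        ⟨haxy'.symm, hax'y.symm, fun hEq => hyy' hEq.symm, hxx',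
          fun ha => hnx'y' ha.symm, fun ha => hnxy ha.symm⟩
      have hAef : (IndepGraph G side).Adj e f := hIef
      by_cases hc : r e f
      · have hDy : D y' y := ⟨e, f, hc, Or.inl ⟨rfl, rfl⟩⟩
        rcases hOy with hDyy' | ⟨hnD, -⟩
        · exact hanti _ _ hDy hDyy'
        · exact hnD hDy
      · have hc' : r f e := by have := hr2 f e hAef.symm; tauto
        have hDx : D x' x := ⟨f, e, hc', Or.inr ⟨rfl, rfl⟩⟩
        rcases hOx with hDxx' | ⟨hnD, -⟩
        · exact hanti _ _ hDx hDxx'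
        · exact hnD hDx

end CocompBigraph
end
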